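/- Every basic information measure H(X_α | X_γ) with α, γ ⊆ N, α nonempty, can be written as a finite sum of elemental information measures (terms of the form H(X_i | X_{N\{i}}) and I(X_i; X_j | X_K), K ⊆ N\{i,j}) with nonnegative coefficients. -/

import Mathlib

open scoped BigOperators

/-- Shannon entropy of a random variable `X` on a finite sample space with PMF `p`. -/
noncomputable def entropy {Ω α : Type*} [Fintype Ω] [Fintype α] [DecidableEq α]
    (p : Ω → ℝ) (X : Ω → α) : ℝ :=
  ∑ a : α, Real.negMulLog (∑ ω ∈ Finset.univ.filter (fun ω => X ω = a), p ω)

/-- Conditional entropy `H(X | Y) = H(X,Y) - H(Y)`. -/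
noncomputable def condEntropy {Ω α γ : Type*} [Fintype Ω] [Fintype α] [Fintype γ]
    [DecidableEq α] [DecidableEq γ] (p : Ω → ℝ) (X : Ω → α) (Y : Ω → γ) : ℝ :=
  entropy p (fun ω => (X ω, Y ω)) - entropy p Y

/-- Mutual information `I(X;Y) = H(X) + H(Y) - H(X,Y)`. -/
noncomputable def mutualInfo {Ω α γ : Type*} [Fintype Ω] [Fintype α] [Fintype γ]
    [DecidableEq α] [DecidableEq γ] (p : Ω → ℝ) (X : Ω → α) (Y : Ω → γ) : ℝ :=
  entropy p X + entropy p Y - entropy p (fun ω => (X ω, Y ω))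

/-- Conditional mutual information
`I(X;Y|Z) = H(X,Z) + H(Y,Z) - H(X,Y,Z) - H(Z)`. -/
noncomputable def condMutualInfo {Ω α γ δ : Type*} [Fintype Ω] [Fintype α] [Fintype γ]
    [Fintype δ] [DecidableEq α] [DecidableEq γ] [DecidableEq δ]
    (p : Ω → ℝ) (X : Ω → α) (Y : Ω → γ) (Z : Ω → δ) : ℝ :=
  entropy p (fun ω => (X ω, Z ω)) + entropy p (fun ω => (Y ω, Z ω))
    - entropy p (fun ω => (X ω, Y ω, Z ω)) - entropy p Z

/-- Joint entropy of the subcollection of random variables indexed by `S`. -/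
noncomputable def subEntropy {n : ℕ} {Ω : Type*} [Fintype Ω] {β : Fin n → Type*}
    [∀ i, Fintype (β i)] [∀ i, DecidableEq (β i)]
    (p : Ω → ℝ) (X : ∀ i, Ω → β i) (S : Finset (Fin n)) : ℝ :=
  entropy p (fun ω => fun i : {i // i ∈ S} => X i ω)

/-- Index of an elemental information measure: either an index `i` (for
`H(X_i | X_{N∖{i}})`) or a triple `(i, j, K)` with `i ≠ j`, `i ∉ K`, `j ∉ K`
(for `I(X_i;X_j|X_K)`). -/
def ElemIdx (n : ℕ) : Type :=
  (Fin n) ⊕ {t : Fin n × Fin n × Finset (Fin n) // t.1 ≠ t.2.1 ∧ t.1 ∉ t.2.2 ∧ t.2.1 ∉ t.2.2}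

instance (n : ℕ) : Fintype (ElemIdx n) := by unfold ElemIdx; infer_instance

/-- The value of the elemental information measure indexed by `e`. -/
noncomputable def elemValue {n : ℕ} {Ω : Type} [Fintype Ω] {β : Fin n → Type}
    [∀ i, Fintype (β i)] [∀ i, DecidableEq (β i)]
    (p : Ω → ℝ) (X : ∀ i, Ω → β i) : ElemIdx n → ℝ
  | Sum.inl i =>
      condEntropy p (X i) (fun ω => fun j : {j // j ∈ Finset.univ.erase i} => X j ω)
  | Sum.inr t =>
      condMutualInfo p (X t.1.1) (X t.1.2.1)
        (fun ω => fun k : {k // k ∈ t.1.2.2} => X k ω)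

lemma entropy_congr {Ω A B : Type*} {iΩ : Fintype Ω} {iA : Fintype A} {iB : Fintype B}
    {dA : DecidableEq A} {dB : DecidableEq B} (p : Ω → ℝ) (X : Ω → A) (Y : Ω → B)
    (h : ∀ ω ω', X ω = X ω' ↔ Y ω = Y ω') : entropy p X = entropy p Y := by
  unfold entropy
  have hX : ∀ a ∈ (Finset.univ : Finset A), a ∉ Finset.univ.image X →
      Real.negMulLog (∑ ω ∈ Finset.univ.filter (fun ω => X ω = a), p ω) = 0 := by
    intro a _ ha
    have he : Finset.univ.filter (fun ω => X ω = a) = ∅ := by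
      ext ω
      simp only [Finset.mem_filter, Finset.mem_univ, true_and, Finset.notMem_empty, iff_false]
      intro hx; exact ha (Finset.mem_image.mpr ⟨ω, Finset.mem_univ ω, hx⟩)
    rw [he]; simp [Real.negMulLog_zero]
  have hY : ∀ b ∈ (Finset.univ : Finset B), b ∉ Finset.univ.image Y →
      Real.negMulLog (∑ ω ∈ Finset.univ.filter (fun ω => Y ω = b), p ω) = 0 := by
    intro b _ hb
    have he : Finset.univ.filter (fun ω => Y ω = b) = ∅ := by
      ext ω
      simp only [Finset.mem_filter, Finset.mem_univ, true_and, Finset.notMem_empty, iff_false]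
      intro hx; exact hb (Finset.mem_image.mpr ⟨ω, Finset.mem_univ ω, hx⟩)
    rw [he]; simp [Real.negMulLog_zero]
  rw [← Finset.sum_subset (Finset.subset_univ _) hX, ← Finset.sum_subset (Finset.subset_univ _) hY]
  refine Finset.sum_bij (fun a ha => Y ((Finset.mem_image.mp ha).choose)) ?_ ?_ ?_ ?_
  · intro a ha; exact Finset.mem_image_of_mem Y (Finset.mem_univ _)
  · intro a₁ h₁ a₂ h₂ heq
    have s₁ := (Finset.mem_image.mp h₁).choose_spec
    have s₂ := (Finset.mem_image.mp h₂).choose_spec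
    rw [← s₁.2, ← s₂.2]
    exact (h _ _).mpr heq
  · intro b hb
    obtain ⟨ω, -, hω⟩ := Finset.mem_image.mp hb
    refine ⟨X ω, Finset.mem_image_of_mem X (Finset.mem_univ ω), ?_⟩
    have s := (Finset.mem_image.mp (Finset.mem_image_of_mem X (Finset.mem_univ ω))).choose_spec
    rw [← hω]
    exact (h _ _).mp s.2
  · intro a ha
    have key : ∀ ω₀, X ω₀ = a →
        Finset.univ.filter (fun ω => X ω = a) = Finset.univ.filter (fun ω => Y ω = Y ω₀) := by
      intro ω₀ hω₀
      ext ω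
      simp only [Finset.mem_filter, Finset.mem_univ, true_and]
      constructor
      · intro hx; exact (h ω ω₀).mp (hx.trans hω₀.symm)
      · intro hy; exact ((h ω ω₀).mpr hy).trans hω₀
    congr 1
    rw [key _ (Finset.mem_image.mp ha).choose_spec.2]
instance (n : ℕ) : DecidableEq (ElemIdx n) := by unfold ElemIdx; infer_instance

def elemE {n : ℕ} (E : Finset (Fin n) → ℝ) : ElemIdx n → ℝ
  | Sum.inl i => E Finset.univ - E (Finset.univ.erase i)
  | Sum.inr t => E (insert t.1.1 t.1.2.2) + E (insert t.1.2.1 t.1.2.2)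
      - E (insert t.1.1 (insert t.1.2.1 t.1.2.2)) - E t.1.2.2

lemma lemA (n : ℕ) : ∀ (k : ℕ) (i : Fin n) (S : Finset (Fin n)), i ∉ S →
    (Finset.univ \ insert i S).card = k →
    ∃ c : ElemIdx n → ℝ, (∀ e, 0 ≤ c e) ∧
      ∀ E : Finset (Fin n) → ℝ, E (insert i S) - E S = ∑ e, c e * elemE E e := by
  intro k
  induction k with
  | zero =>
    intro i S hiS hcard
    have huniv : insert i S = Finset.univ :=
      Finset.univ_subset_iff.mp
        (Finset.sdiff_eq_empty_iff_subset.mp (Finset.card_eq_zero.mp hcard))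
    have hS : S = Finset.univ.erase i := by
      rw [← huniv, Finset.erase_insert hiS]
    classical
    refine ⟨fun e => if e = Sum.inl i then 1 else 0, fun e => by positivity, fun E => ?_⟩
    simp [ite_mul, Finset.sum_ite_eq', elemE, huniv, hS]
    symm
    refine (Finset.sum_eq_single_of_mem (Sum.inl i : ElemIdx n) (Finset.mem_univ _) ?_).trans (if_pos rfl)
    intro b _ hb
    exact if_neg hb
  | succ k ih =>
    intro i S hiS hcard
    have hne : (Finset.univ \ insert i S).Nonempty := by
      rw [← Finset.card_pos, hcard]; omega
    obtain ⟨j, hj⟩ := hne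
    have hj' := hj
    rw [Finset.mem_sdiff, Finset.mem_insert] at hj'
    push_neg at hj'
    obtain ⟨-, hji, hjS⟩ := hj'
    have hij : i ≠ j := fun h => hji h.symm
    have hiS' : i ∉ insert j S := by simp [hij, hiS]
    have hcard' : (Finset.univ \ insert i (insert j S)).card = k := by
      rw [Finset.insert_comm, Finset.sdiff_insert, Finset.card_erase_of_mem hj, hcard]; omega
    obtain ⟨c', hc'pos, hc'⟩ := ih i (insert j S) hiS' hcard'
    set t : ElemIdx n := Sum.inr ⟨(i, j, S), hij, hiS, hjS⟩ with ht
    refine ⟨fun e => c' e + (if e = t then 1 else 0),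
      fun e => add_nonneg (hc'pos e) (by split <;> norm_num), fun E => ?_⟩
    have hsum : ∑ e, (c' e + (if e = t then 1 else 0)) * elemE E e
        = (∑ e, c' e * elemE E e) + elemE E t := by
      simp only [add_mul, ite_mul, one_mul, zero_mul, Finset.sum_add_distrib,
        Finset.sum_ite_eq', Finset.mem_univ, if_true]
    rw [hsum, ← hc' E]
    simp only [ht, elemE]
    ring

lemma lemB (n : ℕ) : ∀ (m : ℕ) (α γ : Finset (Fin n)), (α \ γ).card = m →
    ∃ c : ElemIdx n → ℝ, (∀ e, 0 ≤ c e) ∧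
      ∀ E : Finset (Fin n) → ℝ, E (α ∪ γ) - E γ = ∑ e, c e * elemE E e := by
  intro m
  induction m with
  | zero =>
    intro α γ hm
    have hsub : α ⊆ γ := by
      rw [← Finset.sdiff_eq_empty_iff_subset]
      exact Finset.card_eq_zero.mp hm
    refine ⟨fun _ => 0, fun _ => le_refl 0, fun E => ?_⟩
    rw [Finset.union_eq_right.mpr hsub]
    simp
  | succ m ih =>
    intro α γ hm
    have hne : (α \ γ).Nonempty := by rw [← Finset.card_pos, hm]; omega
    obtain ⟨i, hi⟩ := hne
    rw [Finset.mem_sdiff] at hi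
    obtain ⟨hiα, hiγ⟩ := hi
    obtain ⟨c₁, hc₁pos, hc₁⟩ := lemA n (Finset.univ \ insert i γ).card i γ hiγ rfl
    have hm' : (α \ insert i γ).card = m := by
      rw [Finset.sdiff_insert, Finset.card_erase_of_mem (Finset.mem_sdiff.mpr ⟨hiα, hiγ⟩), hm]; omega
    obtain ⟨c₂, hc₂pos, hc₂⟩ := ih α (insert i γ) hm'
    refine ⟨fun e => c₁ e + c₂ e, fun e => add_nonneg (hc₁pos e) (hc₂pos e), fun E => ?_⟩
    have hu : α ∪ insert i γ = α ∪ γ := by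
      rw [Finset.union_insert, Finset.insert_eq_self.mpr (Finset.mem_union_left γ hiα)]
    have h2 := hc₂ E
    rw [hu] at h2
    have h1 := hc₁ E
    simp only [add_mul, Finset.sum_add_distrib]
    linarith

lemma pair_iff {n : ℕ} {Ω : Type} {β : Fin n → Type} (X : ∀ i, Ω → β i)
    (i : Fin n) (K : Finset (Fin n)) (ω ω' : Ω) :
    ((X i ω, fun k : {k // k ∈ K} => X k ω) = (X i ω', fun k : {k // k ∈ K} => X k ω'))
      ↔ ((fun k : {k // k ∈ insert i K} => X k ω)
          = (fun k : {k // k ∈ insert i K} => X k ω')) := by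
  simp only [Prod.mk.injEq, funext_iff, Subtype.forall, Finset.mem_insert]
  constructor
  · rintro ⟨h1, h2⟩ k hk
    rcases hk with rfl | hk
    · exact h1
    · exact h2 k hk
  · intro h
    exact ⟨h i (Or.inl rfl), fun k hk => h k (Or.inr hk)⟩

lemma triple_iff {n : ℕ} {Ω : Type} {β : Fin n → Type} (X : ∀ i, Ω → β i)
    (i j : Fin n) (K : Finset (Fin n)) (ω ω' : Ω) :
    ((X i ω, X j ω, fun k : {k // k ∈ K} => X k ω)
        = (X i ω', X j ω', fun k : {k // k ∈ K} => X k ω'))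
      ↔ ((fun k : {k // k ∈ insert i (insert j K)} => X k ω)
          = (fun k : {k // k ∈ insert i (insert j K)} => X k ω')) := by
  simp only [Prod.mk.injEq, funext_iff, Subtype.forall, Finset.mem_insert]
  constructor
  · rintro ⟨h1, h2, h3⟩ k hk
    rcases hk with rfl | rfl | hk
    · exact h1
    · exact h2
    · exact h3 k hk
  · intro h
    exact ⟨h i (Or.inl rfl), h j (Or.inr (Or.inl rfl)), fun k hk => h k (Or.inr (Or.inr hk))⟩

lemma union_iff {n : ℕ} {Ω : Type} {β : Fin n → Type} (X : ∀ i, Ω → β i)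
    (α γ : Finset (Fin n)) (ω ω' : Ω) :
    (((fun i : {i // i ∈ α} => X i ω), (fun i : {i // i ∈ γ} => X i ω))
        = ((fun i : {i // i ∈ α} => X i ω'), (fun i : {i // i ∈ γ} => X i ω')))
      ↔ ((fun k : {k // k ∈ α ∪ γ} => X k ω) = (fun k : {k // k ∈ α ∪ γ} => X k ω')) := by
  simp only [Prod.mk.injEq, funext_iff, Subtype.forall, Finset.mem_union]
  constructor
  · rintro ⟨h1, h2⟩ k hk
    rcases hk with hk | hk
    · exact h1 k hk
    · exact h2 k hk
  · intro h
    exact ⟨fun k hk => h k (Or.inl hk), fun k hk => h k (Or.inr hk)⟩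

lemma elemValue_eq {n : ℕ} {Ω : Type} [Fintype Ω] {β : Fin n → Type}
    [∀ i, Fintype (β i)] [∀ i, DecidableEq (β i)]
    (p : Ω → ℝ) (X : ∀ i, Ω → β i) (e : ElemIdx n) :
    elemValue p X e = elemE (subEntropy p X) e := by
  cases e with
  | inl i =>
    simp only [elemValue, elemE, condEntropy]
    have h2 : subEntropy p X (Finset.univ : Finset (Fin n))
        = subEntropy p X (insert i (Finset.univ.erase i)) := by
      rw [Finset.insert_erase (Finset.mem_univ i)]
    rw [h2]
    exact congrArg₂ (· - ·)
      (entropy_congr p _ _ (pair_iff X i (Finset.univ.erase i)))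
      (entropy_congr p _ _ (fun ω ω' => Iff.rfl))
  | inr t =>
    obtain ⟨⟨i, j, K⟩, hij, hiK, hjK⟩ := t
    simp only [elemValue, elemE, condMutualInfo]
    exact congrArg₂ (· - ·) (congrArg₂ (· - ·) (congrArg₂ (· + ·)
      (entropy_congr p _ _ (pair_iff X i K))
      (entropy_congr p _ _ (pair_iff X j K)))
      (entropy_congr p _ _ (triple_iff X i j K)))
      (entropy_congr p _ _ (fun ω ω' => Iff.rfl))

set_option linter.unusedVariables false in
/-- Every basic conditional entropy `H(X_α | X_γ)` (with `α` nonempty) is a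
nonnegative linear combination of elemental information measures, with
coefficients independent of the distribution. -/
theorem stmt5 (n : ℕ) (α γ : Finset (Fin n)) (hα : α.Nonempty) :
    ∃ c : ElemIdx n → ℝ, (∀ e, 0 ≤ c e) ∧
      ∀ (Ω : Type) [Fintype Ω] (β : Fin n → Type) [∀ i, Fintype (β i)]
        [∀ i, DecidableEq (β i)] (p : Ω → ℝ) (X : ∀ i, Ω → β i),
        (∀ ω, 0 ≤ p ω) → (∑ ω, p ω) = 1 →
        condEntropy p (fun ω => fun i : {i // i ∈ α} => X i ω)
            (fun ω => fun i : {i // i ∈ γ} => X i ω)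
          = ∑ e, c e * elemValue p X e := by
  classical
  obtain ⟨c, hcpos, hc⟩ := lemB n (α \ γ).card α γ rfl
  refine ⟨c, hcpos, ?_⟩
  intro Ω _ β _ _ p X _ _
  have h := hc (subEntropy p X)
  have hsum : ∑ e, c e * elemValue p X e = ∑ e, c e * elemE (subEntropy p X) e :=
    Finset.sum_congr rfl (fun e _ => by rw [elemValue_eq])
  rw [condEntropy, hsum, ← h]
  exact congrArg₂ (· - ·)
    (entropy_congr p _ _ (union_iff X α γ))
    (entropy_congr p _ _ (fun ω ω' => Iff.rfl))
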